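/- Let n ≥ 2 and suppose u ∈ C²(ℝ²) is a bounded entire solution of Δu = W'(u) on ℝ² with u(ℝ²) ⊂ [a,b], where W ∈ C¹(ℝ) satisfies W'(a) = W'(b) = 0 and W' < 0 on (a,b). Then u is constant: either u ≡ a or u ≡ b. -/

import Mathlib

open Real MeasureTheory Filter Set

noncomputable def lap {n : ℕ} (f : EuclideanSpace ℝ (Fin n) → ℝ) (x : EuclideanSpace ℝ (Fin n)) : ℝ :=
  ∑ i : Fin n, iteratedFDeriv ℝ 2 f x ![EuclideanSpace.single i 1, EuclideanSpace.single i 1]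

local notation "E2" => EuclideanSpace ℝ (Fin 2)


/-- Second derivative test: at an interior local min, second derivative is nonneg. -/
lemma sdt (g g' : ℝ → ℝ) (ρ : ℝ) (hρ : 0 < ρ)
    (hg : ∀ t ∈ Ioo (-ρ) ρ, HasDerivAt g (g' t) t)
    (c2 : ℝ) (hg' : HasDerivAt g' c2 0) (hmin : IsLocalMin g 0) : 0 ≤ c2 := by
  have h00 : (0:ℝ) ∈ Ioo (-ρ) ρ := by constructor <;> linarith
  have h0 : g' 0 = 0 := by
    have h1 := hmin.deriv_eq_zero
    rwa [(hg 0 h00).deriv] at h1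
  by_contra hc
  push_neg at hc
  -- slope of g' tends to c2 < 0
  have hsl : Tendsto (slope g' 0) (nhdsWithin 0 {0}ᶜ) (nhds c2) :=
    hasDerivAt_iff_tendsto_slope.1 hg'
  have hev : ∀ᶠ t in nhdsWithin 0 {0}ᶜ, slope g' 0 t < 0 :=
    hsl.eventually_lt_const hc
  rw [eventually_nhdsWithin_iff, Metric.eventually_nhds_iff] at hev
  obtain ⟨ρ₁, hρ₁, hneg⟩ := hev
  obtain ⟨ρ₂, hρ₂, hmin2⟩ := Metric.eventually_nhds_iff.1 hmin
  set τ : ℝ := min (min ρ ρ₁) ρ₂ / 2 with hτ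
  have hτpos : 0 < τ := by positivity
  have hτρ : τ < ρ := by
    have : min (min ρ ρ₁) ρ₂ ≤ ρ := le_trans (min_le_left _ _) (min_le_left _ _)
    linarith
  have hτρ₁ : τ < ρ₁ := by
    have : min (min ρ ρ₁) ρ₂ ≤ ρ₁ := le_trans (min_le_left _ _) (min_le_right _ _)
    linarith
  have hτρ₂ : τ < ρ₂ := by
    have : min (min ρ ρ₁) ρ₂ ≤ ρ₂ := min_le_right _ _
    linarith
  have hsub : Icc (0:ℝ) τ ⊆ Ioo (-ρ) ρ := by
    intro t ht
    exact ⟨by linarith [ht.1], by linarith [ht.2]⟩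
  have hcont : ContinuousOn g (Icc 0 τ) := fun t ht =>
    ((hg t (hsub ht)).continuousAt).continuousWithinAt
  obtain ⟨w, hw, hweq⟩ := exists_hasDerivAt_eq_slope g g' hτpos hcont
    (fun t ht => hg t (hsub (Ioo_subset_Icc_self ht)))
  -- g' w < 0 since slope g' 0 w < 0 and w > 0
  have hwd : dist w 0 < ρ₁ := by
    rw [Real.dist_eq, sub_zero, abs_of_pos hw.1]; linarith [hw.2]
  have hsw : slope g' 0 w < 0 := hneg hwd (by simp [ne_of_gt hw.1])
  have hgw : g' w < 0 := by
    have : slope g' 0 w = g' w / w := by simp [slope_def_field, h0, div_eq_mul_inv]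
    rw [this] at hsw
    exact neg_of_div_neg_left hsw hw.1.le
  -- but slope (g τ - g 0)/τ ≥ 0 by local min
  have hτd : dist τ 0 < ρ₂ := by
    rw [Real.dist_eq, sub_zero, abs_of_pos hτpos]; exact hτρ₂
  have hge : g 0 ≤ g τ := hmin2 hτd
  rw [hweq] at hgw
  have : 0 ≤ (g τ - g 0) / τ := div_nonneg (by linarith) hτpos.le
  simp at hgw
  linarith


lemma line_hasDerivAt (v z : E2) (t : ℝ) :
    HasDerivAt (fun s : ℝ => z + s • v) v t := by
  have h1 : HasDerivAt (fun s : ℝ => s • v) ((1:ℝ) • v) t :=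
    (hasDerivAt_id t).smul_const v
  simpa using h1.const_add z

lemma uline1 (u : E2 → ℝ) (hu : ContDiff ℝ 2 u) (z v : E2) (t : ℝ) :
    HasDerivAt (fun s : ℝ => u (z + s • v)) (fderiv ℝ u (z + t • v) v) t := by
  have hd : DifferentiableAt ℝ u (z + t • v) :=
    (hu.differentiable (by norm_num)).differentiableAt
  exact (hd.hasFDerivAt.comp_hasDerivAt t (line_hasDerivAt v z t))

lemma uline2 (u : E2 → ℝ) (hu : ContDiff ℝ 2 u) (z v : E2) (t : ℝ) :
    HasDerivAt (fun s : ℝ => fderiv ℝ u (z + s • v) v)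
      (fderiv ℝ (fderiv ℝ u) (z + t • v) v v) t := by
  have hfd : ContDiff ℝ 1 (fderiv ℝ u) := hu.fderiv_right (by norm_num)
  have hd : DifferentiableAt ℝ (fderiv ℝ u) (z + t • v) :=
    (hfd.differentiable (by norm_num)).differentiableAt
  have h1 : HasFDerivAt (fun y : E2 => (fderiv ℝ u y) v)
      ((ContinuousLinearMap.apply ℝ ℝ v).comp (fderiv ℝ (fderiv ℝ u) (z + t • v)))
      (z + t • v) :=
    (ContinuousLinearMap.apply ℝ ℝ v).hasFDerivAt.comp _ hd.hasFDerivAt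
  have h2 := h1.comp_hasDerivAt t (line_hasDerivAt v z t)
  exact h2


lemma lap_eq (u : E2 → ℝ) (x : E2) :
    lap u x = fderiv ℝ (fderiv ℝ u) x (EuclideanSpace.single 0 1) (EuclideanSpace.single 0 1)
      + fderiv ℝ (fderiv ℝ u) x (EuclideanSpace.single 1 1) (EuclideanSpace.single 1 1) := by
  simp [lap, Fin.sum_univ_two, iteratedFDeriv_two_apply]

lemma isLocalMin_line {h : E2 → ℝ} {z : E2} (hm : IsLocalMin h z) (v : E2) :
    IsLocalMin (fun t : ℝ => h (z + t • v)) 0 := by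
  have hc : Continuous (fun t : ℝ => z + t • v) :=
    continuous_const.add (continuous_id.smul continuous_const)
  have ht : Tendsto (fun t : ℝ => z + t • v) (nhds 0) (nhds z) :=
    hc.tendsto' 0 z (by simp)
  have := ht.eventually hm
  simpa [IsLocalMin, IsMinFilter] using this


noncomputable def qc (c y : E2) : ℝ := (y 0 - c 0)^2 + (y 1 - c 1)^2

lemma qc_dist (c y : E2) : qc c y = dist y c ^ 2 := by
  rw [EuclideanSpace.dist_eq, Real.sq_sqrt]
  · simp [qc, Fin.sum_univ_two, Real.dist_eq, sq_abs]
  · positivity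

lemma qc_pos {c y : E2} (h : y ≠ c) : 0 < qc c y := by
  rw [qc_dist]
  have : dist y c ≠ 0 := fun h0 => h (by rwa [dist_eq_zero] at h0)
  positivity

-- inner polynomial p(t) = (A+t)^2 + B^2
lemma pbar_hasDerivAt (A B t : ℝ) :
    HasDerivAt (fun t : ℝ => (A + t)^2 + B^2) (2*(A+t)) t := by
  have h : HasDerivAt (fun t : ℝ => A + t) 1 t := (hasDerivAt_id t).const_add A
  have := (h.pow 2).add_const (B^2)
  refine this.congr_deriv ?_
  simp
  try ring

lemma bar1 (A B ε δ t : ℝ) (hs : (A+t)^2 + B^2 ≠ 0) :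
    HasDerivAt (fun t : ℝ => ε * Real.log ((A+t)^2 + B^2) - δ*((A+t)^2+B^2))
      (ε * ((2*(A+t)) / ((A+t)^2+B^2)) - δ*(2*(A+t))) t := by
  have hp := pbar_hasDerivAt A B t
  exact ((hp.log hs).const_mul ε).sub (hp.const_mul δ)

lemma bar2 (A B ε δ : ℝ) (hs : A^2 + B^2 ≠ 0) :
    HasDerivAt (fun t : ℝ => ε * ((2*(A+t)) / ((A+t)^2+B^2)) - δ*(2*(A+t)))
      (ε * ((2*(A^2+B^2) - (2*A)*(2*A)) / (A^2+B^2)^2) - δ*2) 0 := by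
  have hn : HasDerivAt (fun t : ℝ => 2*(A+t)) 2 0 := by
    have h : HasDerivAt (fun t : ℝ => A + t) 1 0 := (hasDerivAt_id 0).const_add A
    simpa using h.const_mul 2
  have hp := pbar_hasDerivAt A B 0
  have hs0 : (A+0)^2 + B^2 ≠ 0 := by simpa using hs
  have hdiv := hn.div hp hs0
  have hfin := (hdiv.const_mul ε).sub (hn.const_mul δ)
  refine hfin.congr_deriv ?_
  simp
  try ring

lemma qc_coord0 (c z : E2) (t : ℝ) :
    qc c (z + t • EuclideanSpace.single 0 (1:ℝ)) = (z 0 - c 0 + t)^2 + (z 1 - c 1)^2 := by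
  simp [qc, EuclideanSpace.single_apply]
  ring

lemma qc_coord1 (c z : E2) (t : ℝ) :
    qc c (z + t • EuclideanSpace.single 1 (1:ℝ)) = (z 1 - c 1 + t)^2 + (z 0 - c 0)^2 := by
  simp [qc, EuclideanSpace.single_apply]
  ring

lemma sum_zero (A B : ℝ) (h : A^2+B^2 ≠ 0) :
    (2*(A^2+B^2) - (2*A)*(2*A)) / (A^2+B^2)^2
      + (2*(B^2+A^2) - (2*B)*(2*B)) / (B^2+A^2)^2 = 0 := by
  have h2 : B^2+A^2 ≠ 0 := by intro h0; exact h (by linarith)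
  field_simp
  ring

lemma dir_second (u : E2 → ℝ) (hu : ContDiff ℝ 2 u) (c z : E2) (ε δ A B : ℝ)
    (v : E2) (hq : ∀ t : ℝ, qc c (z + t • v) = (A + t)^2 + B^2)
    (hs : 0 < A^2 + B^2)
    (hmin : IsLocalMin (fun y => u y + ε * Real.log (qc c y) - δ * qc c y) z) :
    0 ≤ fderiv ℝ (fderiv ℝ u) z v v
        + (ε * ((2*(A^2+B^2) - (2*A)*(2*A)) / (A^2+B^2)^2) - δ*2) := by
  -- find ρ such that (A+t)^2+B^2 > 0 on Ioo (-ρ) ρ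
  have hcφ : Continuous (fun t : ℝ => (A+t)^2 + B^2) := by continuity
  have hev : ∀ᶠ t in nhds (0:ℝ), 0 < (A+t)^2+B^2 := by
    have h0 : (0:ℝ) < (A+(0:ℝ))^2+B^2 := by simpa using hs
    exact (hcφ.tendsto 0).eventually (eventually_gt_nhds h0)
  obtain ⟨ρ, hρ, hpos⟩ := Metric.eventually_nhds_iff.1 hev
  have hfun : (fun t : ℝ => u (z + t • v) + ε * Real.log (qc c (z + t • v))
      - δ * qc c (z + t • v))
      = fun t : ℝ => u (z + t • v) + (ε * Real.log ((A+t)^2+B^2) - δ*((A+t)^2+B^2)) := by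
    funext t
    rw [hq t]
    ring
  have hloc : IsLocalMin (fun t : ℝ => u (z + t • v)
      + (ε * Real.log ((A+t)^2+B^2) - δ*((A+t)^2+B^2))) 0 := by
    have h1 := isLocalMin_line hmin v
    rw [show (fun t : ℝ => u (z + t • v) + ε * Real.log (qc c (z + t • v))
      - δ * qc c (z + t • v)) = _ from hfun] at h1
    exact h1
  have hg : ∀ t ∈ Ioo (-ρ) ρ, HasDerivAt
      (fun t : ℝ => u (z + t • v) + (ε * Real.log ((A+t)^2+B^2) - δ*((A+t)^2+B^2)))
      (fderiv ℝ u (z + t • v) v + (ε * ((2*(A+t)) / ((A+t)^2+B^2)) - δ*(2*(A+t)))) t := by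
    intro t ht
    have hd : dist t 0 < ρ := by
      rw [Real.dist_eq, sub_zero, abs_lt]; exact ⟨ht.1, ht.2⟩
    exact (uline1 u hu z v t).add (bar1 A B ε δ t (ne_of_gt (hpos hd)))
  have hg' : HasDerivAt
      (fun t : ℝ => fderiv ℝ u (z + t • v) v + (ε * ((2*(A+t)) / ((A+t)^2+B^2)) - δ*(2*(A+t))))
      (fderiv ℝ (fderiv ℝ u) z v v
        + (ε * ((2*(A^2+B^2) - (2*A)*(2*A)) / (A^2+B^2)^2) - δ*2)) 0 := by
    have h1 := (uline2 u hu z v 0).add (bar2 A B ε δ (ne_of_gt hs))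
    simp only [zero_smul, add_zero] at h1
    exact h1
  exact sdt _ _ ρ hρ hg _ hg' hloc

lemma annulus_min (u : E2 → ℝ) (hu : ContDiff ℝ 2 u) (hlap : ∀ y, lap u y ≤ 0)
    (c : E2) (r R ε δ : ℝ) (hr : 0 < r) (hrR : r ≤ R) (hε : 0 < ε) (hδ : 0 < δ) :
    ∃ z, (dist z c = r ∨ dist z c = R) ∧ ∀ y, r ≤ dist y c → dist y c ≤ R →
      u z + ε * Real.log (qc c z) - δ * qc c z ≤ u y + ε * Real.log (qc c y) - δ * qc c y := by
  set h : E2 → ℝ := fun y => u y + ε * Real.log (qc c y) - δ * qc c y with hh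
  set K : Set E2 := Metric.closedBall c R ∩ (Metric.ball c r)ᶜ with hK
  have hKmem : ∀ y, y ∈ K ↔ (r ≤ dist y c ∧ dist y c ≤ R) := by
    intro y
    simp [hK, Metric.mem_closedBall, Metric.mem_ball, not_lt, and_comm]
  have hKc : IsCompact K :=
    IsCompact.of_isClosed_subset (isCompact_closedBall c R)
      (Metric.isClosed_closedBall.inter (Metric.isOpen_ball.isClosed_compl)) inter_subset_left
  have hne : K.Nonempty := by
    refine ⟨c + r • EuclideanSpace.single 0 (1:ℝ), ?_⟩
    have hd : dist (c + r • EuclideanSpace.single 0 (1:ℝ)) c = r := by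
      rw [dist_eq_norm]
      simp [norm_smul, abs_of_pos hr]
    rw [hKmem]
    exact ⟨le_of_eq hd.symm, by rw [hd]; exact hrR⟩
  have hqpos : ∀ y ∈ K, 0 < qc c y := by
    intro y hy
    rw [hKmem] at hy
    apply qc_pos
    intro hyc
    rw [hyc, dist_self] at hy
    linarith [hy.1]
  have hqcont : Continuous (fun y : E2 => qc c y) := by
    have h0 : Continuous (fun y : E2 => y 0) := (EuclideanSpace.proj (0 : Fin 2)).continuous
    have h1 : Continuous (fun y : E2 => y 1) := (EuclideanSpace.proj (1 : Fin 2)).continuous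
    unfold qc
    fun_prop
  have hcont : ContinuousOn h K := by
    intro y hy
    apply ContinuousAt.continuousWithinAt
    have hlog : ContinuousAt (fun y : E2 => Real.log (qc c y)) y :=
      (Real.continuousAt_log (ne_of_gt (hqpos y hy))).comp hqcont.continuousAt
    exact ((hu.continuous.continuousAt).add (continuousAt_const.mul hlog)).sub
      (continuousAt_const.mul hqcont.continuousAt)
  obtain ⟨z, hzK, hz⟩ := hKc.exists_isMinOn hne hcont
  refine ⟨z, ?_, fun y h1 h2 => hz ((hKmem y).2 ⟨h1, h2⟩)⟩
  by_contra hb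
  push_neg at hb
  rw [hKmem] at hzK
  have hzr : r < dist z c := lt_of_le_of_ne hzK.1 (Ne.symm hb.1)
  have hzR : dist z c < R := lt_of_le_of_ne hzK.2 hb.2
  -- z is an interior local min
  have hU : IsOpen {y : E2 | r < dist y c ∧ dist y c < R} := by
    have hdc : Continuous (fun y : E2 => dist y c) := continuous_id.dist continuous_const
    exact (isOpen_lt continuous_const hdc).inter (isOpen_lt hdc continuous_const)
  have hKnz : K ∈ nhds z := by
    apply Filter.mem_of_superset (hU.mem_nhds ⟨hzr, hzR⟩)
    intro y hy
    exact (hKmem y).2 ⟨le_of_lt hy.1, le_of_lt hy.2⟩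
  have hlocal : IsLocalMin h z := hz.isLocalMin hKnz
  set A : ℝ := z 0 - c 0 with hA
  set B : ℝ := z 1 - c 1 with hB
  have hzc : z ≠ c := by
    intro hzc
    rw [hzc, dist_self] at hzr
    linarith
  have hs : 0 < A^2 + B^2 := by
    have := qc_pos hzc
    simpa [qc, ← hA, ← hB] using this
  have hd0 := dir_second u hu c z ε δ A B (EuclideanSpace.single 0 1)
    (fun t => qc_coord0 c z t) hs hlocal
  have hd1 := dir_second u hu c z ε δ B A (EuclideanSpace.single 1 1)
    (fun t => by rw [qc_coord1 c z t]) (by nlinarith [hs]) hlocal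
  have hlapz := hlap z
  rw [lap_eq] at hlapz
  have hzero := sum_zero A B (ne_of_gt hs)
  have hmul : ε * ((2*(A^2+B^2) - (2*A)*(2*A)) / (A^2+B^2)^2)
      + ε * ((2*(B^2+A^2) - (2*B)*(2*B)) / (B^2+A^2)^2) = 0 := by
    rw [← mul_add, hzero, mul_zero]
  linarith [hd0, hd1, hlapz, hmul, hδ]


lemma liouville (u : E2 → ℝ) (hu : ContDiff ℝ 2 u) (hlap : ∀ y, lap u y ≤ 0)
    (a : ℝ) (hlb : ∀ y, a ≤ u y) (x c : E2) : u c ≤ u x := by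
  rcases eq_or_ne x c with rfl | hxc
  · exact le_refl _
  have hd : 0 < dist x c := dist_pos.2 hxc
  apply le_of_forall_pos_le_add
  intro η hη
  -- continuity radius
  obtain ⟨r₀, hr₀, hcont⟩ := Metric.continuousAt_iff.1 (hu.continuous.continuousAt (x := c))
    (η/4) (by positivity)
  set r : ℝ := min (r₀/2) (dist x c) with hrdef
  have hr : 0 < r := lt_min (by positivity) hd
  have hrd : r ≤ dist x c := min_le_right _ _
  set qx : ℝ := qc c x with hqx
  have hqxd : qx = dist x c ^ 2 := qc_dist c x
  have hqxpos : 0 < qx := by rw [hqxd]; positivity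
  have hr2qx : r^2 ≤ qx := by rw [hqxd]; nlinarith [hr, hrd]
  set T : ℝ := Real.log qx - Real.log (r^2) with hT
  have hTnn : 0 ≤ T := by
    have := Real.log_le_log (by positivity : (0:ℝ) < r^2) hr2qx
    rw [hT]; linarith
  set ε : ℝ := η / (4*(T+1)) with hε
  have hεpos : 0 < ε := by positivity
  have hεT : ε * T ≤ η/4 := by
    rw [hε]
    rw [div_mul_eq_mul_div, div_le_div_iff₀ (by positivity) (by norm_num)]
    nlinarith [hTnn, hη]
  set D : ℝ := u c - η/4 + ε * Real.log qx + 1 with hD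
  set R : ℝ := max (dist x c) (Real.exp (max ((D - a)/ε) 0)) with hR
  have hRd : dist x c ≤ R := le_max_left _ _
  have hRr : r ≤ R := hrd.trans hRd
  have hRpos : 0 < R := lt_of_lt_of_le hd hRd
  have hlogR : D - a ≤ ε * Real.log (R^2) := by
    have h1 : max ((D - a)/ε) 0 ≤ Real.log R :=
      (Real.le_log_iff_exp_le hRpos).2 (le_max_right _ _)
    have h2 : (D - a)/ε ≤ Real.log R := le_trans (le_max_left _ _) h1
    have h3 : 0 ≤ Real.log R := le_trans (le_max_right _ _) h1
    have h4 : Real.log (R^2) = 2 * Real.log R := by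
      rw [show (R^2) = R*R by ring, Real.log_mul (ne_of_gt hRpos) (ne_of_gt hRpos)]; ring
    rw [h4]
    rw [div_le_iff₀ hεpos] at h2
    nlinarith
  clear_value r qx T ε D R
  -- final bound for each δ
  have key : ∀ δ : ℝ, 0 < δ → u c ≤ u x + η/2 + δ*(qx + R^2) := by
    intro δ hδ
    obtain ⟨z, hzb, hzmin⟩ := annulus_min u hu hlap c r R ε δ hr hRr hεpos hδ
    have hx := hzmin x hrd hRd
    rw [← hqx] at hx
    have hsplit : δ*(qx + R^2) = δ*qx + δ*R^2 := by ring
    have hδqx : 0 ≤ δ * qx := by positivity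
    rcases hzb with hzr | hzR
    · have hqz : qc c z = r^2 := by rw [qc_dist, hzr]
      have huz : u c - η/4 ≤ u z := by
        have hzr0 : dist z c < r₀ := by
          rw [hzr]
          have : r ≤ r₀/2 := by rw [hrdef]; exact min_le_left _ _
          linarith
        have h5 := hcont hzr0
        rw [Real.dist_eq, abs_lt] at h5
        linarith [h5.1]
      rw [hqz] at hx
      have hms : ε * Real.log qx - ε * Real.log (r^2) = ε * T := by
        rw [← mul_sub, ← hT]
      have hδr : δ * r^2 ≤ δ * qx := by nlinarith [hδ, hr2qx]
      have hδR : 0 ≤ δ * R^2 := by positivity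
      linarith
    · have hqz : qc c z = R^2 := by rw [qc_dist, hzR]
      have huz : a ≤ u z := hlb z
      rw [hqz] at hx
      linarith
  apply le_of_forall_pos_le_add
  intro ζ hζ
  have h1 := key (ζ/(qx + R^2 + 1)) (by positivity)
  have h2 : (ζ/(qx + R^2 + 1)) * (qx + R^2) ≤ ζ := by
    rw [div_mul_eq_mul_div, div_le_iff₀ (by positivity)]
    nlinarith [hqxpos, hRpos, hζ]
  linarith


theorem stmt_4 (a b : ℝ) (W : ℝ → ℝ) (hW : ContDiff ℝ 1 W)
    (hWa : deriv W a = 0) (hWb : deriv W b = 0)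
    (hW' : ∀ s, a < s → s < b → deriv W s < 0)
    (u : EuclideanSpace ℝ (Fin 2) → ℝ) (hu : ContDiff ℝ 2 u)
    (hbdd : ∃ M, ∀ x, |u x| ≤ M)
    (heq : ∀ x, lap u x = deriv W (u x))
    (hrange : ∀ x, u x ∈ Set.Icc a b) :
    (∀ x, u x = a) ∨ (∀ x, u x = b) := by
  have hlap : ∀ y, lap u y ≤ 0 := by
    intro y
    rw [heq y]
    rcases eq_or_lt_of_le (hrange y).1 with h1 | h1
    · rw [← h1, hWa]
    rcases eq_or_lt_of_le (hrange y).2 with h2 | h2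
    · rw [h2, hWb]
    exact le_of_lt (hW' _ h1 h2)
  have hconst : ∀ x c : E2, u c ≤ u x :=
    liouville u hu hlap a (fun y => (hrange y).1)
  have hval : ∀ x : E2, u x = u 0 := fun x => le_antisymm (hconst 0 x) (hconst x 0)
  have hu0 : u = fun _ : E2 => u 0 := funext hval
  have hlap0 : lap u 0 = 0 := by
    rw [hu0]
    simp [lap, iteratedFDeriv_const_of_ne (by norm_num : (2:ℕ) ≠ 0)]
  have hW0 : deriv W (u 0) = 0 := by rw [← heq 0, hlap0]
  rcases eq_or_lt_of_le (hrange 0).1 with h1 | h1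
  · left; intro x; rw [hval x, ← h1]
  rcases eq_or_lt_of_le (hrange 0).2 with h2 | h2
  · right; intro x; rw [hval x, h2]
  exact absurd hW0 (ne_of_lt (hW' _ h1 h2))
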